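/- Let γ_k = γ/(k+Γ)^a and η_k = η/(k+Γ)^b with γ, η > 0, Γ ≥ 1, a > b > 0, and 3a + b < 2. Then for all k ≥ 1, (1/(γ_k³ η_k)) · (1 - η_k/η_{k-1})² ≤ 1/(γ³ η Γ^{2-3a-b}). -/

import Mathlib

theorem stmt_2 (γ η Γ a b : ℝ) (hγ : 0 < γ) (hη : 0 < η) (hΓ : 1 ≤ Γ)
    (hab : b < a) (hb : 0 < b) (h2 : 3*a + b < 2) (k : ℕ) (hk : 1 ≤ k) :
    (1 / ((γ / ((k:ℝ) + Γ) ^ a) ^ 3 * (η / ((k:ℝ) + Γ) ^ b))) *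
      (1 - (η / ((k:ℝ) + Γ) ^ b) / (η / (((k:ℝ) - 1) + Γ) ^ b)) ^ 2
      ≤ 1 / (γ ^ 3 * η * Γ ^ (2 - 3*a - b)) := by
  have hk1 : (1:ℝ) ≤ (k:ℝ) := by exact_mod_cast hk
  set y : ℝ := (k:ℝ) + Γ with hy
  set z : ℝ := ((k:ℝ) - 1) + Γ with hz
  have hy2 : (2:ℝ) ≤ y := by rw [hy]; linarith
  have hy0 : (0:ℝ) < y := by linarith
  have hz1 : (1:ℝ) ≤ z := by rw [hz]; linarith
  have hz0 : (0:ℝ) < z := by linarith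
  have hzy : z ≤ y := by rw [hy, hz]; linarith
  have hΓ0 : (0:ℝ) < Γ := by linarith
  have hΓy : Γ ≤ y := by rw [hy]; linarith
  have hb1 : b < 1 := by linarith
  -- the ratio simplifies
  have hrat : (η / y ^ b) / (η / z ^ b) = (z / y) ^ b := by
    rw [Real.div_rpow hz0.le hy0.le]
    field_simp
  -- t := z/y
  have ht0 : (0:ℝ) < z / y := div_pos hz0 hy0
  have ht1 : z / y ≤ 1 := (div_le_one hy0).mpr hzy
  have htb1 : (z / y) ^ b ≤ 1 := Real.rpow_le_one ht0.le ht1 hb.le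
  have htb : z / y ≤ (z / y) ^ b := by
    have := Real.rpow_le_rpow_of_exponent_ge ht0 ht1 hb1.le
    rwa [Real.rpow_one] at this
  have hsub : 1 - (z / y) ^ b ≤ 1 / y := by
    have h1 : 1 - z / y = 1 / y := by
      field_simp
      simp only [hy, hz]; ring
    linarith
  have hsq : (1 - (η / y ^ b) / (η / z ^ b)) ^ 2 ≤ (1 / y) ^ 2 := by
    rw [hrat]
    exact pow_le_pow_left₀ (by linarith) hsub 2
  have hA : 0 ≤ 1 / ((γ / y ^ a) ^ 3 * (η / y ^ b)) := by
    positivity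
  have step1 : (1 / ((γ / y ^ a) ^ 3 * (η / y ^ b))) *
      (1 - (η / y ^ b) / (η / z ^ b)) ^ 2
      ≤ (1 / ((γ / y ^ a) ^ 3 * (η / y ^ b))) * (1 / y) ^ 2 :=
    mul_le_mul_of_nonneg_left hsq hA
  refine step1.trans ?_
  -- rewrite the middle expression
  have hmid : (1 / ((γ / y ^ a) ^ 3 * (η / y ^ b))) * (1 / y) ^ 2
      = 1 / (γ ^ 3 * η * y ^ (2 - 3*a - b)) := by
    have hya : (0:ℝ) < y ^ a := Real.rpow_pos_of_pos hy0 a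
    have hyb : (0:ℝ) < y ^ b := Real.rpow_pos_of_pos hy0 b
    have hyc : (0:ℝ) < y ^ (2 - 3*a - b) := Real.rpow_pos_of_pos hy0 _
    have key : y ^ (2 - 3*a - b) * ((y ^ a) ^ 3 * y ^ b) = y ^ (2:ℕ) := by
      rw [← Real.rpow_natCast (y ^ a) 3, ← Real.rpow_natCast y 2,
        ← Real.rpow_mul hy0.le, ← Real.rpow_add hy0, ← Real.rpow_add hy0]
      congr 1
      push_cast; ring
    rw [div_pow]
    field_simp
    linear_combination key
  rw [hmid]
  -- final comparison
  have hexp : Γ ^ (2 - 3*a - b) ≤ y ^ (2 - 3*a - b) :=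
    Real.rpow_le_rpow hΓ0.le hΓy (by linarith)
  have h1 : 0 < γ ^ 3 * η * Γ ^ (2 - 3*a - b) := by positivity
  apply one_div_le_one_div_of_le h1
  have := mul_le_mul_of_nonneg_left hexp (by positivity : (0:ℝ) ≤ γ ^ 3 * η)
  linarith
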